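/- Let P_n(t) be the polynomials defined recursively by P_{-1}(t) = 1, P_0(t) = 1, and P_{n+1}(t) = P_n(t) - t·P_{n-1}(t) for n ≥ 0. Then for λ = 1/(4cos²(π/m)) with m ≥ 3, one has P_{m-2}(λ) = 0, while P_n(λ) > 0 for all -1 ≤ n < m-2. -/

import Mathlib

/-- With the Jones polynomials `P₋₁ = 1`, `P₀ = 1`,
`P_{n+1} = P_n - t·P_{n-1}`, evaluated at `λ = 1/(4cos²(π/m))` for `m ≥ 3`,
one has `P_{m-2}(λ) = 0` and `P_n(λ) > 0` for `-1 ≤ n < m-2`. -/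
theorem stmt0 (P : ℤ → ℝ) (lam : ℝ) (m : ℕ) (hm : 3 ≤ m)
    (hlam : lam = 1 / (4 * Real.cos (Real.pi / m) ^ 2))
    (hP1 : P (-1) = 1) (hP0 : P 0 = 1)
    (hrec : ∀ n : ℤ, 0 ≤ n → P (n + 1) = P n - lam * P (n - 1)) :
    P ((m : ℤ) - 2) = 0 ∧ ∀ n : ℤ, -1 ≤ n → n < (m : ℤ) - 2 → 0 < P n := by
  have hmR : (3:ℝ) ≤ (m:ℝ) := by exact_mod_cast hm
  have hmpos : (0:ℝ) < (m:ℝ) := by linarith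
  set θ := Real.pi / m with hθ
  have hπ := Real.pi_pos
  have hθpos : 0 < θ := div_pos hπ hmpos
  have hθlt : θ < Real.pi / 2 := by
    rw [hθ, div_lt_div_iff₀ hmpos two_pos]
    nlinarith
  have hc : 0 < Real.cos θ := Real.cos_pos_of_mem_Ioo ⟨by linarith, hθlt⟩
  have hs : 0 < Real.sin θ := Real.sin_pos_of_pos_of_lt_pi hθpos (by linarith)
  have hcne : Real.cos θ ≠ 0 := ne_of_gt hc
  have hsne : Real.sin θ ≠ 0 := ne_of_gt hs
  -- trig recursion
  have trig : ∀ x : ℝ, Real.sin (x + θ) = 2 * Real.cos θ * Real.sin x - Real.sin (x - θ) := by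
    intro x
    rw [Real.sin_add, Real.sin_sub]
    ring
  have key : ∀ k : ℕ, P ((k:ℤ) - 1)
      = Real.sin ((k + 1) * θ) / (Real.sin θ * (2 * Real.cos θ) ^ k) := by
    have main : ∀ k : ℕ,
        (P ((k:ℤ) - 1) = Real.sin ((k + 1) * θ) / (Real.sin θ * (2 * Real.cos θ) ^ k)) ∧
        (P (((k+1:ℕ):ℤ) - 1) = Real.sin (((k:ℝ) + 1 + 1) * θ) / (Real.sin θ * (2 * Real.cos θ) ^ (k+1))) := by
      intro k
      induction k with
      | zero =>
        constructor
        · simpa using hP1.trans (by field_simp)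
        · have h2 : Real.sin ((0 + 1 + 1 : ℝ) * θ) = 2 * Real.sin θ * Real.cos θ := by
            norm_num [Real.sin_two_mul]
          have h3 : ((0+1:ℕ):ℤ) - 1 = 0 := by norm_num
          rw [h3, hP0]
          push_cast
          rw [h2]
          field_simp
      | succ k ih =>
        obtain ⟨ih1, ih2⟩ := ih
        refine ⟨by exact_mod_cast ih2, ?_⟩
        have hrk := hrec k (by positivity)
        have hcast : (((k+1+1:ℕ):ℤ) - 1) = (k:ℤ) + 1 := by push_cast; ring
        rw [hcast, hrk, ih1]
        have ih2' : P ((k:ℤ)) = Real.sin (((k:ℝ) + 1 + 1) * θ) / (Real.sin θ * (2 * Real.cos θ) ^ (k+1)) := by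
          have : (((k+1:ℕ):ℤ) - 1) = (k:ℤ) := by push_cast; ring
          rwa [this] at ih2
        rw [ih2', hlam]
        have htrig : Real.sin (((k:ℝ)+1+1+1) * θ)
            = 2 * Real.cos θ * Real.sin (((k:ℝ)+1+1) * θ) - Real.sin (((k:ℝ)+1) * θ) := by
          have := trig (((k:ℝ)+1+1) * θ)
          have e1 : ((k:ℝ)+1+1) * θ + θ = ((k:ℝ)+1+1+1) * θ := by ring
          have e2 : ((k:ℝ)+1+1) * θ - θ = ((k:ℝ)+1) * θ := by ring
          rwa [e1, e2] at this
        have hne : (2 * Real.cos θ) ≠ 0 := by positivity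
        push_cast
        rw [htrig]
        field_simp
        ring
    exact fun k => (main k).1
  constructor
  · have h1 : ((m:ℤ) - 2) = ((m - 1 : ℕ) : ℤ) - 1 := by
      have : (1:ℕ) ≤ m := by omega
      push_cast [this]; ring
    rw [h1, key (m-1)]
    have hmc : ((m - 1 : ℕ) : ℝ) = (m:ℝ) - 1 := by
      have : (1:ℕ) ≤ m := by omega
      push_cast [this]; ring
    rw [hmc]
    have : ((m:ℝ) - 1 + 1) * θ = Real.pi := by
      rw [hθ]; field_simp; ring
    rw [this, Real.sin_pi, zero_div]
  · intro n hn1 hn2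
    have hn0 : 0 ≤ n + 1 := by linarith
    obtain ⟨k, hk⟩ := Int.eq_ofNat_of_zero_le hn0
    have hn : n = (k:ℤ) - 1 := by omega
    rw [hn, key k]
    have hklt : (k:ℝ) + 1 < (m:ℝ) := by
      have : (k:ℤ) + 1 < (m:ℤ) := by omega
      exact_mod_cast this
    have h1 : 0 < ((k:ℝ) + 1) * θ := by positivity
    have h2 : ((k:ℝ) + 1) * θ < Real.pi := by
      rw [hθ, ← mul_div_assoc, div_lt_iff₀ hmpos]
      nlinarith
    have := Real.sin_pos_of_pos_of_lt_pi h1 h2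
    positivity
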